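/- There are exactly four Lawvere–Tierney topologies on the topos of graphs: the identity, the constant-true topology ⊤∘!, the double negation topology ¬¬, and the closed topology for the global element st (defined on arcs by j(0_A)=st, j(s)=j(t)=st, j(st)=st, j(A)=A, and sending both nodes to 'in'). -/

import Mathlib

/-- A directed graph: nodes, arcs, source and target maps. -/
structure DirGraph where
  N : Type
  A : Type
  src : A → N
  tgt : A → N

/-- A graph morphism. -/
@[ext]
structure Hom (G H : DirGraph) where
  fN : G.N → H.N
  fA : G.A → H.A
  hsrc : ∀ a, H.src (fA a) = fN (G.src a)
  htgt : ∀ a, H.tgt (fA a) = fN (G.tgt a)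

/-- Composition of graph morphisms. -/
def Hom.comp {G H K : DirGraph} (g : Hom H K) (f : Hom G H) : Hom G K where
  fN := g.fN ∘ f.fN
  fA := g.fA ∘ f.fA
  hsrc a := by simp [g.hsrc, f.hsrc]
  htgt a := by simp [g.htgt, f.htgt]

/-- The arcs of the subobject classifier of graphs. -/
inductive OmegaA | zero | s | t | st | top
deriving DecidableEq

/-- The subobject classifier graph `Ω`: nodes are `Bool` (`true` = "in",
`false` = "out"); arcs `0_A : out→out`, `s : in→out`, `t : out→in`,
`st : in→in`, `A : in→in`. -/
def Omega : DirGraph where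
  N := Bool
  A := OmegaA
  src a := match a with
    | .zero => false | .s => true | .t => false | .st => true | .top => true
  tgt a := match a with
    | .zero => false | .s => false | .t => true | .st => true | .top => true

/-- A subgraph of `G`, given by a set of nodes and a set of arcs whose
endpoints belong to the node set. -/
def IsSubgraph (G : DirGraph) (SN : Set G.N) (SA : Set G.A) : Prop :=
  ∀ a ∈ SA, G.src a ∈ SN ∧ G.tgt a ∈ SN

/-- `χ : G → Ω` classifies the subgraph `(SN, SA)`: the subgraph is the pullback
of `⊤ : 1 → Ω` (picking the node `true` and the arc `top`) along `χ`. -/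
def Classifies {G : DirGraph} (χ : Hom G Omega) (SN : Set G.N) (SA : Set G.A) : Prop :=
  (∀ n, n ∈ SN ↔ χ.fN n = true) ∧ (∀ a, a ∈ SA ↔ χ.fA a = OmegaA.top)

/-- The order on the arcs of `Ω`: `0_A < s, t < st < A` with `s, t` incomparable. -/
def leA : OmegaA → OmegaA → Prop := fun x y =>
  x = y ∨ x = OmegaA.zero ∨ y = OmegaA.top ∨ (x ≠ OmegaA.top ∧ y = OmegaA.st)

/-- The meet on the arcs of `Ω` with respect to the order
`0_A < s, t < st < A` (`s`, `t` incomparable). -/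
def meetA : OmegaA → OmegaA → OmegaA
  | .top, x => x
  | x, .top => x
  | .zero, _ => .zero
  | _, .zero => .zero
  | .st, x => x
  | x, .st => x
  | .s, .s => .s
  | .t, .t => .t
  | .s, .t => .zero
  | .t, .s => .zero

/-- A Lawvere–Tierney topology on the topos of graphs, described concretely as a
graph endomorphism of `Ω` preserving truth and conjunction and idempotent. -/
def IsTopology (j : Hom Omega Omega) : Prop :=
  (j.fN true = true ∧ j.fA OmegaA.top = OmegaA.top) ∧
  (∀ n, j.fN (j.fN n) = j.fN n) ∧ (∀ a, j.fA (j.fA a) = j.fA a) ∧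
  (∀ n m, j.fN (n && m) = (j.fN n && j.fN m)) ∧
  (∀ a b, j.fA (meetA a b) = meetA (j.fA a) (j.fA b))

/-- The identity topology. -/
def idTop : Hom Omega Omega := ⟨id, id, fun _ => rfl, fun _ => rfl⟩

/-- The constant-true topology `⊤ ∘ !`. -/
def trueTop : Hom Omega Omega where
  fN _ := true
  fA _ := OmegaA.top
  hsrc a := by cases a <;> rfl
  htgt a := by cases a <;> rfl

/-- The double negation topology. -/
def negnegTop : Hom Omega Omega where
  fN n := n
  fA a := match a with
    | .st => .top | .top => .top | .zero => .zero | .s => .s | .t => .t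
  hsrc a := by cases a <;> rfl
  htgt a := by cases a <;> rfl

/-- The closed topology for the global element `st`. -/
def closedTop : Hom Omega Omega where
  fN _ := true
  fA a := match a with
    | .top => .top | _ => .st
  hsrc a := by cases a <;> rfl
  htgt a := by cases a <;> rfl




instance : Fintype OmegaA :=
  ⟨⟨{.zero, .s, .t, .st, .top}, by decide⟩, by intro x; cases x <;> decide⟩

instance : DecidableEq Omega.N := inferInstanceAs (DecidableEq Bool)
instance : Fintype Omega.N := inferInstanceAs (Fintype Bool)
instance : DecidableEq Omega.A := inferInstanceAs (DecidableEq OmegaA)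
instance : Fintype Omega.A := inferInstanceAs (Fintype OmegaA)

def mkN (b : Bool) : Bool → Bool := fun n => bif n then true else b

def mkA (az as at' ast : OmegaA) : OmegaA → OmegaA := fun a => match a with
  | .zero => az | .s => as | .t => at' | .st => ast | .top => OmegaA.top

set_option synthInstance.maxSize 5000 in
set_option synthInstance.maxHeartbeats 1000000 in
set_option maxHeartbeats 2000000 in
lemma key_classification (b : Bool) (az as at' ast : OmegaA) :
    ((∀ a, Omega.src (mkA az as at' ast a) = mkN b (Omega.src a)) ∧
     (∀ a, Omega.tgt (mkA az as at' ast a) = mkN b (Omega.tgt a)) ∧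
     (∀ n, mkN b (mkN b n) = mkN b n) ∧
     (∀ a, mkA az as at' ast (mkA az as at' ast a) = mkA az as at' ast a) ∧
     (∀ n m, mkN b (n && m) = (mkN b n && mkN b m)) ∧
     (∀ x y, mkA az as at' ast (meetA x y)
        = meetA (mkA az as at' ast x) (mkA az as at' ast y))) ↔
    ((b = false ∧ az = .zero ∧ as = .s ∧ at' = .t ∧ ast = .st) ∨
     (b = true ∧ az = .top ∧ as = .top ∧ at' = .top ∧ ast = .top) ∨
     (b = false ∧ az = .zero ∧ as = .s ∧ at' = .t ∧ ast = .top) ∨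
     (b = true ∧ az = .st ∧ as = .st ∧ at' = .st ∧ ast = .st)) := by
  revert b az as at' ast; unfold Omega; decide

/-- there are exactly four Lawvere–Tierney topologies on the topos
of graphs: the identity, the constant-true topology, double negation, and the
closed topology for `st`. -/
theorem topologies_classification (j : Hom Omega Omega) :
    IsTopology j ↔ j = idTop ∨ j = trueTop ∨ j = negnegTop ∨ j = closedTop := by
  constructor
  · rintro ⟨⟨hN1, hA1⟩, h2, h3, h4, h5⟩
    have eN : j.fN = mkN (j.fN false) := by
      funext n; cases n <;> simp [mkN, hN1] <;> rfl
    have eA : j.fA = mkA (j.fA .zero) (j.fA .s) (j.fA .t) (j.fA .st) := by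
      funext a; cases a <;> simp [mkA, hA1] <;> rfl
    have hk := (key_classification (j.fN false) (j.fA .zero) (j.fA .s) (j.fA .t) (j.fA .st)).mp
      ⟨by intro a; rw [← eN, ← eA]; exact j.hsrc a,
       by intro a; rw [← eN, ← eA]; exact j.htgt a,
       by intro n; rw [← eN]; exact h2 n,
       by intro a; rw [← eA]; exact h3 a,
       by intro n m; rw [← eN]; exact h4 n m,
       by intro x y; rw [← eA]; exact h5 x y⟩
    rcases hk with ⟨e1, e2, e3, e4, e5⟩ | ⟨e1, e2, e3, e4, e5⟩ | ⟨e1, e2, e3, e4, e5⟩ | ⟨e1, e2, e3, e4, e5⟩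
    · refine Or.inl (Hom.ext ?_ ?_)
      · funext n; cases n <;> simp [idTop, hN1, e1] <;> rfl
      · funext a; cases a <;> simp [idTop, hA1, e2, e3, e4, e5] <;> rfl
    · refine Or.inr (Or.inl (Hom.ext ?_ ?_))
      · funext n; cases n <;> simp [trueTop, hN1, e1] <;> rfl
      · funext a; cases a <;> simp [trueTop, hA1, e2, e3, e4, e5] <;> rfl
    · refine Or.inr (Or.inr (Or.inl (Hom.ext ?_ ?_)))
      · funext n; cases n <;> simp [negnegTop, hN1, e1] <;> rfl
      · funext a; cases a <;> simp [negnegTop, hA1, e2, e3, e4, e5] <;> rfl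
    · refine Or.inr (Or.inr (Or.inr (Hom.ext ?_ ?_)))
      · funext n; cases n <;> simp [closedTop, hN1, e1] <;> rfl
      · funext a; cases a <;> simp [closedTop, hA1, e2, e3, e4, e5] <;> rfl
  · rintro (rfl | rfl | rfl | rfl) <;>
      exact ⟨⟨rfl, rfl⟩, by intro n; cases n <;> rfl, by intro a; cases a <;> rfl,
        by intro n m; cases n <;> cases m <;> rfl, by intro a b; cases a <;> cases b <;> rfl⟩
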